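/- Let R be a commutative ring and g ∈ SL₃(R). Define Φ(g) on the Zorn vector matrix algebra by Φ(g)([[a₁,u],[v,a₂]]) = [[a₁, g·u],[(gᵀ)⁻¹·v, a₂]]. Then Φ(g) is an R-algebra automorphism of the Zorn algebra (it preserves the Zorn product and the unit), and it fixes the diagonal subalgebra {[[a₁,0],[0,a₂]]} pointwise. -/

import Mathlib

open Matrix

/-- Elements of the Zorn vector matrix algebra, written `(a₁, u, v, a₂)`
for the vector matrix `[[a₁, u],[v, a₂]]`. -/
abbrev Zorn (R : Type*) [CommRing R] := R × (Fin 3 → R) × (Fin 3 → R) × R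

/-- The Zorn vector matrix product. -/
def zmul {R : Type*} [CommRing R] (A B : Zorn R) : Zorn R :=
  (A.1 * B.1 - A.2.1 ⬝ᵥ B.2.2.1,
   A.1 • B.2.1 + B.2.2.2 • A.2.1 + crossProduct A.2.2.1 B.2.2.1,
   B.1 • A.2.2.1 + A.2.2.2 • B.2.2.1 + crossProduct A.2.1 B.2.1,
   -(B.2.1 ⬝ᵥ A.2.2.1) + A.2.2.2 * B.2.2.2)

/-- The identity vector matrix `[[1,0],[0,1]]`. -/
def zone {R : Type*} [CommRing R] : Zorn R := (1, 0, 0, 1)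

/-- The Zorn norm `N([[a₁,u],[v,a₂]]) = a₁a₂ + ⟨v,u⟩`. -/
def znorm {R : Type*} [CommRing R] (A : Zorn R) : R := A.1 * A.2.2.2 + A.2.2.1 ⬝ᵥ A.2.1

lemma dot_adj_aux {R : Type*} [CommRing R] (g : Matrix (Fin 3) (Fin 3) R)
    (hg : g.det = 1) (u v : Fin 3 → R) :
    g.mulVec u ⬝ᵥ (adjugate gᵀ).mulVec v = u ⬝ᵥ v := by
  simp only [mulVec, dotProduct, adjugate_fin_three, transpose_apply, of_apply,
    Fin.sum_univ_three, cons_val', cons_val_zero, cons_val_one, head_cons,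
    head_fin_const, cons_val_two, tail_cons]
  have := hg
  rw [det_fin_three] at this
  linear_combination (u 0 * v 0 + u 1 * v 1 + u 2 * v 2) * this

lemma cross_adj_aux {R : Type*} [CommRing R] (M : Matrix (Fin 3) (Fin 3) R)
    (u v : Fin 3 → R) :
    crossProduct (M.mulVec u) (M.mulVec v) = (adjugate Mᵀ).mulVec (crossProduct u v) := by
  funext i
  fin_cases i <;>
  · simp [crossProduct, mulVec, dotProduct, adjugate_fin_three, Fin.sum_univ_three]
    ring

/-- for `g ∈ SL₃(R)`, the map
`Φ(g)([[a₁,u],[v,a₂]]) = [[a₁, g·u],[(gᵀ)⁻¹·v, a₂]]` is an `R`-algebra automorphism of the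
Zorn algebra (it preserves the Zorn product and the unit), and it fixes the diagonal
subalgebra pointwise. -/
theorem zorn_Phi_automorphism {R : Type*} [CommRing R] (g : Matrix (Fin 3) (Fin 3) R)
    (hg : g.det = 1) :
    let Phi : Zorn R → Zorn R :=
      fun A => (A.1, g.mulVec A.2.1, (gᵀ)⁻¹.mulVec A.2.2.1, A.2.2.2)
    (∀ A B : Zorn R, Phi (zmul A B) = zmul (Phi A) (Phi B)) ∧
    Phi zone = zone ∧
    Function.Bijective Phi ∧
    (∀ (r : R) (A B : Zorn R), Phi (r • A + B) = r • Phi A + Phi B) ∧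
    (∀ a₁ a₂ : R, Phi (a₁, 0, 0, a₂) = (a₁, 0, 0, a₂)) := by
  intro Phi
  have hgu : IsUnit g.det := by rw [hg]; exact isUnit_one
  have hgtu : IsUnit gᵀ.det := by rw [det_transpose, hg]; exact isUnit_one
  have hinv : (gᵀ)⁻¹ = adjugate gᵀ := by
    rw [inv_def, det_transpose, hg, Ring.inverse_one, one_smul]
  have hadj2 : adjugate ((adjugate gᵀ)ᵀ) = g := by
    rw [adjugate_transpose, transpose_transpose, adjugate_adjugate g (by simp), hg, one_pow, one_smul]
  refine ⟨?_, ?_, ?_, ?_, ?_⟩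
  · intro A B
    show (_, _, _, _) = (_, _, _, _)
    simp only [zmul, hinv, Prod.mk.injEq, Phi]
    refine ⟨?_, ?_, ?_, ?_⟩
    · rw [dot_adj_aux g hg]
    · rw [mulVec_add, mulVec_add, mulVec_smul, mulVec_smul,
        ← hadj2, ← cross_adj_aux, hadj2]
    · rw [mulVec_add, mulVec_add, mulVec_smul, mulVec_smul, cross_adj_aux]
    · rw [dot_adj_aux g hg]
  · show (_, _, _, _) = zone
    simp [zone, mulVec_zero]
  · constructor
    · intro A B h
      have h1 := congrArg (·.1) h
      have h2 := congrArg (fun x : Zorn R => g⁻¹.mulVec x.2.1) h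
      have h3 := congrArg (fun x : Zorn R => (gᵀ).mulVec x.2.2.1) h
      have h4 := congrArg (·.2.2.2) h
      simp only [Phi, mulVec_mulVec, nonsing_inv_mul g hgu, mul_nonsing_inv gᵀ hgtu,
        one_mulVec] at h1 h2 h3 h4
      exact Prod.ext h1 (Prod.ext h2 (Prod.ext h3 h4))
    · intro A
      refine ⟨(A.1, g⁻¹.mulVec A.2.1, (gᵀ).mulVec A.2.2.1, A.2.2.2), ?_⟩
      show (_, _, _, _) = A
      simp only [mulVec_mulVec, mul_nonsing_inv g hgu, nonsing_inv_mul gᵀ hgtu, one_mulVec]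
  · intro r A B
    show (_, _, _, _) = _
    simp [Phi, mulVec_add, mulVec_smul, Prod.add_def, Prod.smul_def]
  · intro a₁ a₂
    show (_, _, _, _) = _
    simp [mulVec_zero]
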